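/- Let q be a prime power and G = AGL_1(F_q) ⊂ GL_2(F_q) the group of matrices (a b; 0 1) with a ≠ 0. For any g ≥ 1, the number of 2g-tuples (A_1,B_1,…,A_g,B_g) ∈ G^{2g} with ∏_{i=1}^g [A_i,B_i] = 1 equals q^{2g−1}(q−1)^{2g} + q^{2g−1}(q−1). -/

import Mathlib

open Matrix
open scoped commutatorElement

section AGLAux

variable {F : Type*} [Field F]

/-- The affine matrix `(a b; 0 1)` as an element of `GL 2`. -/
def agl (a : Fˣ) (b : F) : GL (Fin 2) F :=
  Matrix.GeneralLinearGroup.mkOfDetNeZero !![(a : F), b; 0, 1]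
    (by simp [Matrix.det_fin_two])

@[simp] lemma agl_val (a : Fˣ) (b : F) :
    (agl a b : Matrix (Fin 2) (Fin 2) F) = !![(a : F), b; 0, 1] := rfl

lemma agl_mul (a c : Fˣ) (b d : F) :
    agl a b * agl c d = agl (a * c) ((a : F) * d + b) := by
  ext i j
  fin_cases i <;> fin_cases j <;>
    simp [Units.val_mul, Matrix.mul_fin_two]

lemma agl_injective2 {a c : Fˣ} {b d : F} (h : agl a b = agl c d) :
    a = c ∧ b = d := by
  have h1 := congrArg (fun u : GL (Fin 2) F => (u : Matrix (Fin 2) (Fin 2) F) 0 0) h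
  have h2 := congrArg (fun u : GL (Fin 2) F => (u : Matrix (Fin 2) (Fin 2) F) 0 1) h
  simp at h1 h2
  exact ⟨Units.ext h1, h2⟩

@[simp] lemma agl_one : agl (1 : Fˣ) (0 : F) = 1 := by
  ext i j
  fin_cases i <;> fin_cases j <;> simp [Matrix.one_fin_two]

lemma agl_commutator (a c : Fˣ) (b d : F) :
    ⁅agl a b, agl c d⁆ = agl 1 (d * ((a : F) - 1) + b * (1 - (c : F))) := by
  have key : agl a b * agl c d
      = agl 1 (d * ((a : F) - 1) + b * (1 - (c : F))) * (agl c d * agl a b) := by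
    rw [agl_mul, agl_mul, agl_mul]
    have h1 : a * c = 1 * (c * a) := by rw [one_mul, mul_comm]
    have h2 : (a : F) * d + b
        = ((1 : Fˣ) : F) * ((c : F) * b + d) + (d * ((a : F) - 1) + b * (1 - (c : F))) := by
      push_cast
      ring
    rw [h1, h2]
  have hcomm : ⁅agl a b, agl c d⁆ = (agl a b * agl c d) * (agl c d * agl a b)⁻¹ := by
    rw [commutatorElement_def]
    group
  rw [hcomm, key, mul_inv_cancel_right]

lemma agl_list_prod (l : List F) :
    (l.map (agl (1 : Fˣ))).prod = agl 1 l.sum := by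
  induction l with
  | nil => simp
  | cons x xs ih => rw [List.map_cons, List.prod_cons, ih, agl_mul, List.sum_cons]; simp [add_comm]

lemma exists_agl (u : GL (Fin 2) F)
    (h0 : (u : Matrix (Fin 2) (Fin 2) F) 1 0 = 0)
    (h1 : (u : Matrix (Fin 2) (Fin 2) F) 1 1 = 1) :
    ∃ a b, u = agl a b := by
  have hdet : IsUnit ((u : Matrix (Fin 2) (Fin 2) F) 0 0) := by
    have := (Matrix.isUnit_iff_isUnit_det (u : Matrix (Fin 2) (Fin 2) F)).mp ⟨u, rfl⟩
    rwa [Matrix.det_fin_two, h0, h1, mul_one, mul_zero, sub_zero] at this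
  refine ⟨hdet.unit, (u : Matrix (Fin 2) (Fin 2) F) 0 1, ?_⟩
  ext i j
  fin_cases i <;> fin_cases j <;> simp [h0, h1, hdet.unit_spec]

end AGLAux

section Hyperplane

variable {F : Type*} [Field F] [Fintype F]

lemma card_hyperplane {ι : Type*} [Fintype ι] (c : ι → F) (j : ι) (hj : c j ≠ 0) :
    Nat.card {x : ι → F // ∑ i, c i * x i = 0}
      = Fintype.card F ^ (Fintype.card ι - 1) := by
  classical
  set f : (ι → F) →+ F :=
    { toFun := fun x => ∑ i, c i * x i
      map_zero' := by simp
      map_add' := by intro x y; simp [mul_add, Finset.sum_add_distrib] } with hf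
  have hsurj : Function.Surjective f := by
    intro y
    refine ⟨(Pi.single j ((c j)⁻¹ * y) : ι → F), ?_⟩
    have : ∀ i, c i * (Pi.single j ((c j)⁻¹ * y) : ι → F) i
        = if i = j then c j * ((c j)⁻¹ * y) else 0 := by
      intro i
      rcases eq_or_ne i j with rfl | h
      · simp
      · simp [Pi.single_apply, h]
    simp only [hf, AddMonoidHom.coe_mk, ZeroHom.coe_mk]
    rw [Finset.sum_congr rfl fun i _ => this i, Finset.sum_ite_eq' Finset.univ j]
    rw [← mul_assoc, mul_inv_cancel₀ hj, one_mul]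
    simp
  have h1 : Nat.card f.ker * f.ker.index = Nat.card (ι → F) :=
    AddSubgroup.card_mul_index _
  have h2 : f.ker.index = Fintype.card F := by
    rw [AddSubgroup.index_ker, AddMonoidHom.range_eq_top.mpr hsurj]
    rw [← Nat.card_eq_fintype_card]
    exact Nat.card_congr AddSubgroup.topEquiv.toEquiv
  have h3 : Nat.card {x : ι → F // ∑ i, c i * x i = 0} = Nat.card f.ker := by
    apply Nat.card_congr
    refine Equiv.subtypeEquivRight fun x => ?_
    rw [AddMonoidHom.mem_ker]
    exact Iff.rfl
  have h4 : Nat.card (ι → F) = Fintype.card F ^ Fintype.card ι := by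
    rw [Nat.card_fun, Nat.card_eq_fintype_card, Nat.card_eq_fintype_card]
  have hpos : 0 < Fintype.card F := Fintype.card_pos
  have hι : 1 ≤ Fintype.card ι := Fintype.card_pos_iff.mpr ⟨j⟩
  rw [h3]
  have hE : Fintype.card ι = (Fintype.card ι - 1) + 1 := (Nat.succ_pred_eq_of_pos hι).symm
  have hpow : Fintype.card F ^ Fintype.card ι
      = Fintype.card F ^ (Fintype.card ι - 1) * Fintype.card F := by
    conv_lhs => rw [hE]
    rw [pow_succ]
  rw [h2, h4, hpow] at h1
  exact Nat.eq_of_mul_eq_mul_right hpos h1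

omit [Fintype F] in
lemma fiber_equiv_sum {g : ℕ} (A C : Fin g → F) :
    Nat.card {bd : Fin g → F × F //
        ∑ i, ((bd i).2 * A i + (bd i).1 * C i) = 0}
      = Nat.card {x : Fin g ⊕ Fin g → F //
        ∑ s, (Sum.elim C A s) * x s = 0} := by
  apply Nat.card_congr
  refine
    { toFun := fun bd => ⟨Sum.elim (fun i => (bd.1 i).1) (fun i => (bd.1 i).2), ?_⟩
      invFun := fun x => ⟨fun i => (x.1 (.inl i), x.1 (.inr i)), ?_⟩
      left_inv := fun bd => by ext i <;> rfl
      right_inv := fun x => by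
        ext s
        rcases s with i | i <;> rfl }
  · rw [Fintype.sum_sum_type]
    simp only [Sum.elim_inl, Sum.elim_inr]
    rw [← Finset.sum_add_distrib]
    refine Eq.trans (Finset.sum_congr rfl fun i _ => by ring) bd.2
  · have hx := x.2
    rw [Fintype.sum_sum_type] at hx
    simp only [Sum.elim_inl, Sum.elim_inr] at hx
    rw [← Finset.sum_add_distrib] at hx
    refine Eq.trans (Finset.sum_congr rfl fun i _ => by ring) hx

open Classical in
lemma fiber_card {g : ℕ} (ac : Fin g → Fˣ × Fˣ) :
    Nat.card {bd : Fin g → F × F //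
        ∑ i, ((bd i).2 * (((ac i).1 : F) - 1) + (bd i).1 * (1 - ((ac i).2 : F))) = 0}
      = if ac = fun _ => (1, 1) then Fintype.card F ^ (2 * g)
        else Fintype.card F ^ (2 * g - 1) := by
  classical
  split_ifs with h
  · subst h
    have : ∀ bd : Fin g → F × F,
        ∑ i, ((bd i).2 * ((((1 : Fˣ) : F)) - 1) + (bd i).1 * (1 - ((1 : Fˣ) : F))) = 0 := by
      intro bd; simp
    rw [Nat.card_congr (Equiv.subtypeUnivEquiv this)]
    rw [Nat.card_fun, Nat.card_prod, Nat.card_eq_fintype_card, Nat.card_eq_fintype_card,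
      Fintype.card_fin, ← pow_two, ← pow_mul, mul_comm]
  · push_neg at h
    have hj : ∃ j, ac j ≠ (1, 1) := by
      by_contra hc
      push_neg at hc
      exact h (funext hc)
    obtain ⟨j, hj⟩ := hj
    rw [fiber_equiv_sum (fun i => ((ac i).1 : F) - 1) (fun i => 1 - ((ac i).2 : F))]
    have hcard : Fintype.card (Fin g ⊕ Fin g) = 2 * g := by
      simp [Fintype.card_sum, two_mul]
    have : (ac j).1 ≠ 1 ∨ (ac j).2 ≠ 1 := by
      by_contra hc
      push_neg at hc
      exact hj (Prod.ext hc.1 hc.2)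
    rcases this with h1 | h1
    · rw [card_hyperplane _ (Sum.inr j) ?_, hcard]
      simp only [Sum.elim_inr]
      rw [sub_ne_zero]
      exact fun hc => h1 (Units.ext (by rw [hc, Units.val_one]))
    · rw [card_hyperplane _ (Sum.inl j) ?_, hcard]
      simp only [Sum.elim_inl]
      intro hc
      rw [sub_eq_zero] at hc
      exact h1 (Units.ext (by rw [← hc, Units.val_one]))

lemma card_T {g : ℕ} :
    Nat.card {w : (Fin g → Fˣ × Fˣ) × (Fin g → F × F) //
        ∑ i, ((w.2 i).2 * (((w.1 i).1 : F) - 1) + (w.2 i).1 * (1 - ((w.1 i).2 : F))) = 0}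
      = Fintype.card F ^ (2 * g)
        + ((Fintype.card F - 1) ^ (2 * g) - 1) * Fintype.card F ^ (2 * g - 1) := by
  classical
  rw [Nat.card_congr (Equiv.subtypeProdEquivSigmaSubtype
    (fun (ac : Fin g → Fˣ × Fˣ) (bd : Fin g → F × F) =>
      ∑ i, ((bd i).2 * (((ac i).1 : F) - 1) + (bd i).1 * (1 - ((ac i).2 : F))) = 0))]
  have hsig : Nat.card (Σ ac : Fin g → Fˣ × Fˣ, {bd : Fin g → F × F //
      ∑ i, ((bd i).2 * (((ac i).1 : F) - 1) + (bd i).1 * (1 - ((ac i).2 : F))) = 0})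
      = ∑ ac : Fin g → Fˣ × Fˣ, Nat.card {bd : Fin g → F × F //
      ∑ i, ((bd i).2 * (((ac i).1 : F) - 1) + (bd i).1 * (1 - ((ac i).2 : F))) = 0} := by
    letI : ∀ ac : Fin g → Fˣ × Fˣ, Fintype {bd : Fin g → F × F //
      ∑ i, ((bd i).2 * (((ac i).1 : F) - 1) + (bd i).1 * (1 - ((ac i).2 : F))) = 0} :=
      fun ac => Fintype.ofFinite _
    rw [Nat.card_eq_fintype_card, Fintype.card_sigma]
    exact Finset.sum_congr rfl fun ac _ => (Nat.card_eq_fintype_card).symm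
  rw [hsig]
  rw [Finset.sum_congr rfl fun ac _ => fiber_card ac]
  rw [← Finset.add_sum_erase Finset.univ _ (Finset.mem_univ (fun _ => ((1 : Fˣ), (1 : Fˣ))))]
  rw [if_pos rfl]
  congr 1
  rw [Finset.sum_congr rfl fun ac hac =>
    if_neg (Finset.ne_of_mem_erase hac)]
  rw [Finset.sum_const, smul_eq_mul]
  congr 1
  rw [Finset.card_erase_of_mem (Finset.mem_univ _), Finset.card_univ]
  congr 1
  rw [← Nat.card_eq_fintype_card, Nat.card_fun, Nat.card_prod]
  simp only [Nat.card_eq_fintype_card, Fintype.card_fin, Fintype.card_units]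
  rw [← pow_two, ← pow_mul, mul_comm]

end Hyperplane

/-- Let `F` be a finite field with `q` elements and `G = AGL₁(F_q) ⊂ GL₂(F_q)` the
group of matrices `(a b; 0 1)` with `a ≠ 0`. For any `g ≥ 1`, the number of
`2g`-tuples `(A₁,B₁,…,A_g,B_g) ∈ G^{2g}` with `∏ᵢ [Aᵢ,Bᵢ] = 1` equals
`q^{2g−1}(q−1)^{2g} + q^{2g−1}(q−1)`. -/
theorem card_representation_variety_AGL1
    (F : Type*) [Field F] [Fintype F] (q g : ℕ) (hq : Fintype.card F = q)
    (hg : 1 ≤ g) :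
    Nat.card {v : Fin g → GL (Fin 2) F × GL (Fin 2) F //
        (∀ i, ((v i).1 : Matrix (Fin 2) (Fin 2) F) 1 0 = 0 ∧
              ((v i).1 : Matrix (Fin 2) (Fin 2) F) 1 1 = 1 ∧
              ((v i).2 : Matrix (Fin 2) (Fin 2) F) 1 0 = 0 ∧
              ((v i).2 : Matrix (Fin 2) (Fin 2) F) 1 1 = 1) ∧
        (List.ofFn fun i => ⁅(v i).1, (v i).2⁆).prod = 1}
      = q ^ (2 * g - 1) * (q - 1) ^ (2 * g) + q ^ (2 * g - 1) * (q - 1) := by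
  classical
  subst hq
  -- Step 1: reparametrize by `(a, c)` and `(b, d)` data.
  have key : Nat.card {v : Fin g → GL (Fin 2) F × GL (Fin 2) F //
        (∀ i, ((v i).1 : Matrix (Fin 2) (Fin 2) F) 1 0 = 0 ∧
              ((v i).1 : Matrix (Fin 2) (Fin 2) F) 1 1 = 1 ∧
              ((v i).2 : Matrix (Fin 2) (Fin 2) F) 1 0 = 0 ∧
              ((v i).2 : Matrix (Fin 2) (Fin 2) F) 1 1 = 1) ∧
        (List.ofFn fun i => ⁅(v i).1, (v i).2⁆).prod = 1}
      = Nat.card {w : (Fin g → Fˣ × Fˣ) × (Fin g → F × F) //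
        ∑ i, ((w.2 i).2 * (((w.1 i).1 : F) - 1) + (w.2 i).1 * (1 - ((w.1 i).2 : F))) = 0} := by
    apply Nat.card_congr
    apply Equiv.symm
    refine Equiv.ofBijective (fun w =>
      ⟨fun i => (agl (w.1.1 i).1 (w.1.2 i).1, agl (w.1.1 i).2 (w.1.2 i).2), ?_, ?_⟩) ⟨?_, ?_⟩
    · intro i
      refine ⟨?_, ?_, ?_, ?_⟩ <;> simp
    · have hc : (fun i => ⁅agl (w.1.1 i).1 (w.1.2 i).1, agl (w.1.1 i).2 (w.1.2 i).2⁆)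
          = fun i => agl 1 ((w.1.2 i).2 * (((w.1.1 i).1 : F) - 1)
              + (w.1.2 i).1 * (1 - ((w.1.1 i).2 : F))) := by
        funext i
        exact agl_commutator _ _ _ _
      rw [hc]
      have hm : (List.ofFn fun i => agl (1 : Fˣ) ((w.1.2 i).2 * (((w.1.1 i).1 : F) - 1)
              + (w.1.2 i).1 * (1 - ((w.1.1 i).2 : F))))
          = (List.ofFn fun i => ((w.1.2 i).2 * (((w.1.1 i).1 : F) - 1)
              + (w.1.2 i).1 * (1 - ((w.1.1 i).2 : F)))).map (agl (1 : Fˣ)) := by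
        rw [List.map_ofFn]
        rfl
      rw [hm, agl_list_prod, List.sum_ofFn, w.2, agl_one]
    · -- injectivity
      intro w w' h
      have h' := congrArg Subtype.val h
      simp only at h'
      have hcomp : ∀ i, agl (w.1.1 i).1 (w.1.2 i).1 = agl (w'.1.1 i).1 (w'.1.2 i).1
          ∧ agl (w.1.1 i).2 (w.1.2 i).2 = agl (w'.1.1 i).2 (w'.1.2 i).2 := by
        intro i
        have := congrFun h' i
        exact ⟨congrArg Prod.fst this, congrArg Prod.snd this⟩
      apply Subtype.ext
      apply Prod.ext
      · funext i
        exact Prod.ext (agl_injective2 (hcomp i).1).1 (agl_injective2 (hcomp i).2).1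
      · funext i
        exact Prod.ext (agl_injective2 (hcomp i).1).2 (agl_injective2 (hcomp i).2).2
    · -- surjectivity
      rintro ⟨v, hv, hprod⟩
      have hch : ∀ i, ∃ p : (Fˣ × F) × (Fˣ × F),
          (v i).1 = agl p.1.1 p.1.2 ∧ (v i).2 = agl p.2.1 p.2.2 := by
        intro i
        obtain ⟨a, b, hab⟩ := exists_agl (v i).1 (hv i).1 (hv i).2.1
        obtain ⟨c, d, hcd⟩ := exists_agl (v i).2 (hv i).2.2.1 (hv i).2.2.2
        exact ⟨((a, b), (c, d)), hab, hcd⟩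
      choose p hp1 hp2 using hch
      have hsum : ∑ i, ((p i).2.2 * (((p i).1.1 : F) - 1)
          + (p i).1.2 * (1 - ((p i).2.1 : F))) = 0 := by
        have hc : (fun i => ⁅(v i).1, (v i).2⁆)
            = fun i => agl 1 ((p i).2.2 * (((p i).1.1 : F) - 1)
                + (p i).1.2 * (1 - ((p i).2.1 : F))) := by
          funext i
          rw [hp1 i, hp2 i]
          exact agl_commutator _ _ _ _
        rw [hc] at hprod
        have hm : (List.ofFn fun i => agl (1 : Fˣ) ((p i).2.2 * (((p i).1.1 : F) - 1)
                + (p i).1.2 * (1 - ((p i).2.1 : F))))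
            = (List.ofFn fun i => ((p i).2.2 * (((p i).1.1 : F) - 1)
                + (p i).1.2 * (1 - ((p i).2.1 : F)))).map (agl (1 : Fˣ)) := by
          rw [List.map_ofFn]
          rfl
        rw [hm, agl_list_prod, List.sum_ofFn, ← agl_one] at hprod
        exact (agl_injective2 hprod).2
      refine ⟨⟨⟨fun i => ((p i).1.1, (p i).2.1), fun i => ((p i).1.2, (p i).2.2)⟩, hsum⟩, ?_⟩
      apply Subtype.ext
      funext i
      simp only
      exact Prod.ext (hp1 i).symm (hp2 i).symm
  rw [key, card_T]
  clear key
  -- Step 2: arithmetic.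
  have hF2 : 2 ≤ Fintype.card F := Fintype.one_lt_card
  generalize Fintype.card F = Q at hF2 ⊢
  have hqq : Q ^ (2 * g) = Q ^ (2 * g - 1) * Q := by
    rw [← pow_succ]
    congr 1
    omega
  rw [hqq]
  generalize Q ^ (2 * g - 1) = X
  have hY1 : 1 ≤ (Q - 1) ^ (2 * g) := Nat.one_le_pow _ _ (by omega)
  generalize hY : (Q - 1) ^ (2 * g) = Y at hY1 ⊢
  zify [hY1, (by omega : 1 ≤ Q)]
  ring
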